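/- Let 𝓕 be the exponential distance matrix of K_{s,t} with q ≠ ±1 and q²(s−1)(t−1) ≠ 1. Then the sum of all cofactors of 𝓕, i.e. det(𝓕) times the sum of all entries of 𝓕⁻¹, equals (1−q²)^{s+t−1}·( 2q(q−1)st/(1−q²) + s + t ). -/

import Mathlib

open Matrix

/-- The exponential distance matrix of a connected graph `G`:
the `(u,v)` entry is `q ^ d(u,v)`. -/
noncomputable def expDistMatrix {V : Type*} (G : SimpleGraph V) (q : ℝ) : Matrix V V ℝ :=
  Matrix.of fun u v => q ^ (G.dist u v)

variable {s t : ℕ}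

lemma cb_dist_inl_inr (i : Fin s) (j : Fin t) :
    (completeBipartiteGraph (Fin s) (Fin t)).dist (Sum.inl i) (Sum.inr j) = 1 := by
  rw [SimpleGraph.dist_eq_one_iff_adj]; simp [completeBipartiteGraph]

lemma cb_dist_inr_inl (i : Fin t) (j : Fin s) :
    (completeBipartiteGraph (Fin s) (Fin t)).dist (Sum.inr i) (Sum.inl j) = 1 := by
  rw [SimpleGraph.dist_eq_one_iff_adj]; simp [completeBipartiteGraph]

lemma cb_dist_inl_inl (ht : 0 < t) {i j : Fin s} (h : i ≠ j) :
    (completeBipartiteGraph (Fin s) (Fin t)).dist (Sum.inl i) (Sum.inl j) = 2 := by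
  set G := completeBipartiteGraph (Fin s) (Fin t)
  obtain ⟨k⟩ := Fin.pos_iff_nonempty.mp ht
  have h1 : G.Adj (Sum.inl i) (Sum.inr k) := by simp [G, completeBipartiteGraph]
  have h2 : G.Adj (Sum.inr k) (Sum.inl j) := by simp [G, completeBipartiteGraph]
  have hle : G.dist (Sum.inl i) (Sum.inl j) ≤ 2 :=
    (SimpleGraph.dist_le (h1.toWalk.append h2.toWalk)).trans (by simp)
  have hne : G.dist (Sum.inl i) (Sum.inl j) ≠ 0 := by
    have := (SimpleGraph.Reachable.pos_dist_of_ne ⟨h1.toWalk.append h2.toWalk⟩ (by simp [h]))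
    omega
  have hne1 : G.dist (Sum.inl i) (Sum.inl j) ≠ 1 := by
    rw [Ne, SimpleGraph.dist_eq_one_iff_adj]; simp [G, completeBipartiteGraph]
  omega

lemma cb_dist_inr_inr (hs : 0 < s) {i j : Fin t} (h : i ≠ j) :
    (completeBipartiteGraph (Fin s) (Fin t)).dist (Sum.inr i) (Sum.inr j) = 2 := by
  set G := completeBipartiteGraph (Fin s) (Fin t)
  obtain ⟨k⟩ := Fin.pos_iff_nonempty.mp hs
  have h1 : G.Adj (Sum.inr i) (Sum.inl k) := by simp [G, completeBipartiteGraph]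
  have h2 : G.Adj (Sum.inl k) (Sum.inr j) := by simp [G, completeBipartiteGraph]
  have hle : G.dist (Sum.inr i) (Sum.inr j) ≤ 2 :=
    (SimpleGraph.dist_le (h1.toWalk.append h2.toWalk)).trans (by simp)
  have hne : G.dist (Sum.inr i) (Sum.inr j) ≠ 0 := by
    have := (SimpleGraph.Reachable.pos_dist_of_ne ⟨h1.toWalk.append h2.toWalk⟩ (by simp [h]))
    omega
  have hne1 : G.dist (Sum.inr i) (Sum.inr j) ≠ 1 := by
    rw [Ne, SimpleGraph.dist_eq_one_iff_adj]; simp [G, completeBipartiteGraph]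
  omega

/-- Cofactor sum of the exponential distance matrix of `K_{s,t}`:
`det(𝓕) · Σ_{i,j} (𝓕⁻¹)_{ij} = (1-q²)^(s+t-1)·(2q(q-1)st/(1-q²) + s + t)`. -/
theorem cofSum_expDistMatrix_completeBipartite (s t : ℕ) (hs : 0 < s) (ht : 0 < t)
    (q : ℝ) (hq0 : q ≠ 0) (hq1 : q ≠ 1) (hq1' : q ≠ -1)
    (hq2 : q ^ 2 * ((s : ℝ) - 1) * ((t : ℝ) - 1) ≠ 1) :
    (expDistMatrix (completeBipartiteGraph (Fin s) (Fin t)) q).det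
        * ∑ i, ∑ j, (expDistMatrix (completeBipartiteGraph (Fin s) (Fin t)) q)⁻¹ i j
      = (1 - q ^ 2) ^ (s + t - 1)
          * (2 * q * (q - 1) * s * t / (1 - q ^ 2) + s + t) := by
  set G := completeBipartiteGraph (Fin s) (Fin t)
  set M := expDistMatrix G q with hMdef
  have hGdef : G = completeBipartiteGraph (Fin s) (Fin t) := rfl
  set α : ℝ := 1 - q ^ 2 with hα
  have hα0 : α ≠ 0 := by
    have h1 : q - 1 ≠ 0 := sub_ne_zero.mpr hq1
    have h2 : q + 1 ≠ 0 := fun h => hq1' (by linarith)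
    have he : α = -((q - 1) * (q + 1)) := by rw [hα]; ring
    simp [he, h1, h2]
  -- entries of M
  have hMll : ∀ i j : Fin s, M (Sum.inl i) (Sum.inl j) = if i = j then 1 else q ^ 2 := by
    intro i j
    by_cases h : i = j
    · simp [hMdef, expDistMatrix, h, SimpleGraph.dist_self]
    · simp [hMdef, expDistMatrix, h, hGdef, cb_dist_inl_inl ht h]
  have hMrr : ∀ i j : Fin t, M (Sum.inr i) (Sum.inr j) = if i = j then 1 else q ^ 2 := by
    intro i j
    by_cases h : i = j
    · simp [hMdef, expDistMatrix, h, SimpleGraph.dist_self]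
    · simp [hMdef, expDistMatrix, h, hGdef, cb_dist_inr_inr hs h]
  have hMlr : ∀ (i : Fin s) (j : Fin t), M (Sum.inl i) (Sum.inr j) = q := by
    intro i j; simp [hMdef, expDistMatrix, hGdef, cb_dist_inl_inr]
  have hMrl : ∀ (i : Fin t) (j : Fin s), M (Sum.inr i) (Sum.inl j) = q := by
    intro i j; simp [hMdef, expDistMatrix, hGdef, cb_dist_inr_inl]
  -- rank-2 decomposition
  set U : Matrix (Fin s ⊕ Fin t) (Fin 2) ℝ :=
    Matrix.of (Sum.elim (fun _ => ![q ^ 2, q]) (fun _ => ![q, q ^ 2])) with hU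
  set W : Matrix (Fin 2) (Fin s ⊕ Fin t) ℝ :=
    Matrix.of ![Sum.elim (fun _ => 1) (fun _ => 0), Sum.elim (fun _ => 0) (fun _ => 1)] with hW
  have hM2 : M = α • (1 + (α⁻¹ • U) * W) := by
    ext v w
    rcases v with i | i <;> rcases w with j | j <;>
      simp only [Matrix.smul_apply, Matrix.add_apply, Matrix.smul_mul,
        Matrix.mul_apply, Fin.sum_univ_two, hU, hW, Matrix.of_apply, Sum.elim_inl, Sum.elim_inr,
        Matrix.cons_val', Matrix.empty_val',
        Matrix.cons_val_zero, Matrix.cons_val_one, Matrix.head_cons, hMll, hMrr, hMlr, hMrl,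
        Sum.inl.injEq, Sum.inr.injEq, smul_eq_mul]
    · rw [Matrix.one_apply]; simp only [Sum.inl.injEq]
      split_ifs <;> field_simp <;> ring
    · rw [Matrix.one_apply_ne (by simp)]; field_simp; ring
    · rw [Matrix.one_apply_ne (by simp)]; field_simp; ring
    · rw [Matrix.one_apply]; simp only [Sum.inr.injEq]
      split_ifs <;> field_simp <;> ring
  have hWU : W * (α⁻¹ • U) = α⁻¹ • !![(s : ℝ) * q ^ 2, s * q; t * q, t * q ^ 2] := by
    ext k l
    fin_cases k <;> fin_cases l <;>
      simp [Matrix.mul_apply, Fintype.sum_sum_type, hU, hW, Finset.sum_const,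
        Finset.card_univ, mul_comm]
    all_goals ring
  have hcard : Fintype.card (Fin s ⊕ Fin t) = s + t := by simp
  have hdet1 : M.det = α ^ (s + t) * Matrix.det (1 + W * (α⁻¹ • U)) := by
    rw [hM2, Matrix.det_smul, hcard, Matrix.det_one_add_mul_comm]
  obtain ⟨n, hn⟩ : ∃ n, s + t = n + 2 := ⟨s + t - 2, by omega⟩
  set Δ : ℝ := (α + s * q ^ 2) * (α + t * q ^ 2) - q ^ 2 * s * t with hΔ
  have hdet2 : M.det = α ^ n * Δ := by
    rw [hdet1, hWU, hn]
    have h22 : (1 : Matrix (Fin 2) (Fin 2) ℝ) + α⁻¹ • !![(s : ℝ) * q ^ 2, s * q; t * q, t * q ^ 2]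
        = !![1 + α⁻¹ * (s * q ^ 2), α⁻¹ * (s * q); α⁻¹ * (t * q), 1 + α⁻¹ * (t * q ^ 2)] := by
      ext k l
      fin_cases k <;> fin_cases l <;> simp [Matrix.one_apply]
    rw [h22, Matrix.det_fin_two_of, hΔ]
    field_simp
    ring
  have hΔ0 : Δ ≠ 0 := by
    have he : Δ = α * (1 - q ^ 2 * ((s : ℝ) - 1) * ((t : ℝ) - 1)) := by rw [hΔ, hα]; ring
    rw [he]
    exact mul_ne_zero hα0 (sub_ne_zero.mpr (Ne.symm hq2))
  have hdet0 : M.det ≠ 0 := by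
    rw [hdet2]; exact mul_ne_zero (pow_ne_zero _ hα0) hΔ0
  -- solve M * u = 1
  set x : ℝ := (α + q ^ 2 * t - q * t) / Δ with hx
  set y : ℝ := (α + q ^ 2 * s - q * s) / Δ with hy
  set u : (Fin s ⊕ Fin t) → ℝ := Sum.elim (fun _ => x) (fun _ => y) with hu
  have hconst : ∀ (m : ℕ) (i : Fin m) (a b : ℝ),
      ∑ j : Fin m, (if i = j then a else b) = b * m + (a - b) := by
    intro m i a b
    have h1 : ∀ j : Fin m, (if i = j then a else b) = b + (if i = j then a - b else 0) :=
      fun j => by split_ifs <;> ring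
    simp only [h1, Finset.sum_add_distrib, Finset.sum_const, Finset.card_univ, Fintype.card_fin,
      Finset.sum_ite_eq, Finset.mem_univ, if_true, nsmul_eq_mul]
    ring
  have hMu : M *ᵥ u = fun _ => 1 := by
    funext v
    rcases v with i | i <;>
      simp only [Matrix.mulVec, dotProduct, Fintype.sum_sum_type, hu, Sum.elim_inl, Sum.elim_inr,
        hMll, hMrr, hMlr, hMrl, ← Finset.sum_mul, hconst, Finset.sum_const, Finset.card_univ,
        Fintype.card_fin, nsmul_eq_mul]
    · rw [hx, hy]; field_simp; rw [hΔ, hα]; ring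
    · rw [hx, hy]; field_simp; rw [hΔ, hα]; ring
  have hinv : M⁻¹ * M = 1 := Matrix.nonsing_inv_mul M (Ne.isUnit hdet0)
  have huu : u = M⁻¹ *ᵥ (fun _ => 1) := by
    rw [← hMu, Matrix.mulVec_mulVec, hinv, Matrix.one_mulVec]
  have hsum : ∑ i, ∑ j, M⁻¹ i j = s * x + t * y := by
    have h1 : ∑ i, ∑ j, M⁻¹ i j = ∑ i, (M⁻¹ *ᵥ (fun _ => 1)) i := by
      simp [Matrix.mulVec, dotProduct]
    rw [h1, ← huu, hu]
    simp [Fintype.sum_sum_type, Finset.sum_const, Finset.card_univ, mul_comm]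
  rw [hsum, hdet2, show s + t - 1 = n + 1 from by omega]
  have hst : (s : ℝ) + t = n + 2 := by
    have : ((s + t : ℕ) : ℝ) = ((n + 2 : ℕ) : ℝ) := by rw [hn]
    push_cast at this; linarith
  rw [hx, hy]
  field_simp
  rw [hα]
  ring
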